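/- The Bessel function J₀ satisfies J₀(x) > 0 for every x ∈ [0, 2.4048] and J₀(2.4049) < 0. Consequently J₀ has a zero in the open interval (2.4048, 2.4049), and its smallest positive zero j₀,₁ lies in that interval. -/
import Mathlib

/-- The Bessel function of the first kind of order `0`, defined by its everywhere-convergent
power series `J₀(x) = Σ_{k≥0} (−1)^k (x/2)^{2k} / (k!)²`. -/
noncomputable def besselJ₀ (x : ℝ) : ℝ :=
  ∑' k : ℕ, (-1 : ℝ) ^ k * (x / 2) ^ (2 * k) / ((Nat.factorial k : ℝ) ^ 2)

namespace BesselAux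

/-- Bessel sum as a function of `t = (x/2)^2`. -/
noncomputable def f (t : ℝ) : ℝ :=
  ∑' k : ℕ, (-1 : ℝ) ^ k * t ^ k / ((Nat.factorial k : ℝ) ^ 2)

/-- Degree-7 Taylor polynomial of `f`. -/
noncomputable def P (t : ℝ) : ℝ :=
  1 - t + t^2/4 - t^3/36 + t^4/576 - t^5/14400 + t^6/518400 - t^7/25401600

lemma besselJ₀_eq (x : ℝ) : besselJ₀ x = f ((x / 2) ^ 2) := by
  unfold besselJ₀ f
  congr 1 with k
  rw [← pow_mul]

lemma fact_one_le (k : ℕ) : (1 : ℝ) ≤ (Nat.factorial k : ℝ) := by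
  exact_mod_cast Nat.one_le_iff_ne_zero.mpr (Nat.factorial_ne_zero k)

lemma fact_le_sq (k : ℕ) : (Nat.factorial k : ℝ) ≤ (Nat.factorial k : ℝ) ^ 2 := by
  nlinarith [fact_one_le k]

lemma abs_term (t : ℝ) (ht : 0 ≤ t) (k : ℕ) :
    |(-1 : ℝ) ^ k * t ^ k / ((Nat.factorial k : ℝ) ^ 2)| =
      t ^ k / ((Nat.factorial k : ℝ) ^ 2) := by
  rw [abs_div, abs_mul, abs_pow, abs_neg, abs_one, one_pow, one_mul,
    abs_of_nonneg (pow_nonneg ht k),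
    abs_of_nonneg (by positivity : (0:ℝ) ≤ (Nat.factorial k : ℝ) ^ 2)]

lemma summable_abs (t : ℝ) (ht : 0 ≤ t) :
    Summable (fun k : ℕ => t ^ k / ((Nat.factorial k : ℝ) ^ 2)) := by
  refine Summable.of_nonneg_of_le (fun k => by positivity) (fun k => ?_)
    (Real.summable_pow_div_factorial t)
  exact div_le_div_of_nonneg_left (by positivity)
    (by positivity) (fact_le_sq k)

lemma summable_f (t : ℝ) (ht : 0 ≤ t) :
    Summable (fun k : ℕ => (-1 : ℝ) ^ k * t ^ k / ((Nat.factorial k : ℝ) ^ 2)) := by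
  refine Summable.of_abs ?_
  simpa only [abs_term t ht] using summable_abs t ht

lemma fact_bound (k : ℕ) : (1625702400 : ℝ) * 81 ^ k ≤ ((Nat.factorial (k + 8) : ℝ)) ^ 2 := by
  have h := @Nat.factorial_mul_pow_le_factorial 8 k
  have h' : ((Nat.factorial 8 * 9 ^ k : ℕ) : ℝ) ≤ (Nat.factorial (8 + k) : ℝ) := by
    exact_mod_cast h
  have h8 : (Nat.factorial 8 : ℝ) = 40320 := by norm_num [Nat.factorial]
  push_cast at h'
  rw [h8] at h'
  rw [(by omega : 8 + k = k + 8)] at h'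
  have hpos : (0 : ℝ) ≤ 40320 * 9 ^ k := by positivity
  have hsq := mul_self_le_mul_self hpos h'
  have h81 : (81 : ℝ) ^ k = 9 ^ k * 9 ^ k := by rw [← mul_pow]; norm_num
  calc (1625702400 : ℝ) * 81 ^ k = (40320 * 9 ^ k) * (40320 * 9 ^ k) := by rw [h81]; ring
    _ ≤ (Nat.factorial (k + 8) : ℝ) * (Nat.factorial (k + 8) : ℝ) := hsq
    _ = ((Nat.factorial (k + 8) : ℝ)) ^ 2 := (sq _).symm

set_option maxHeartbeats 2000000 in
lemma tail_bound {t : ℝ} (h0 : 0 ≤ t) (h1 : t ≤ 3 / 2) :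
    |f t - P t| ≤ t ^ 8 * (54 / 53 / 1625702400) := by
  have hsum := summable_f t h0
  have hsplit := Summable.sum_add_tsum_nat_add 8 hsum
  have hP : (∑ i ∈ Finset.range 8, (-1 : ℝ) ^ i * t ^ i / ((Nat.factorial i : ℝ) ^ 2)) = P t := by
    simp [Finset.sum_range_succ, Nat.factorial, P]
    ring
  have hfm : f t - P t = ∑' k : ℕ, (-1 : ℝ) ^ (k + 8) * t ^ (k + 8) /
      ((Nat.factorial (k + 8) : ℝ) ^ 2) := by
    rw [← hP, f, ← hsplit]
    ring
  have hterm : ∀ k : ℕ, |(-1 : ℝ) ^ (k + 8) * t ^ (k + 8) / ((Nat.factorial (k + 8) : ℝ) ^ 2)| ≤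
      t ^ 8 / 1625702400 * (1 / 54) ^ k := by
    intro k
    rw [abs_term t h0 (k + 8)]
    have hnum : t ^ (k + 8) ≤ t ^ 8 * (3 / 2) ^ k := by
      have he : t ^ (k + 8) = t ^ 8 * t ^ k := by rw [pow_add]; ring
      rw [he]
      exact mul_le_mul_of_nonneg_left (pow_le_pow_left₀ h0 h1 k) (pow_nonneg h0 8)
    calc t ^ (k + 8) / ((Nat.factorial (k + 8) : ℝ) ^ 2)
        ≤ (t ^ 8 * (3 / 2) ^ k) / (1625702400 * 81 ^ k) :=
          div_le_div₀ (by positivity) hnum (by positivity) (fact_bound k)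
      _ = t ^ 8 / 1625702400 * ((3 / 2) ^ k / 81 ^ k) := by ring
      _ = t ^ 8 / 1625702400 * (1 / 54) ^ k := by rw [← div_pow]; norm_num
  have hgeo : Summable (fun k : ℕ => t ^ 8 / 1625702400 * (1 / 54) ^ k) :=
    (summable_geometric_of_lt_one (by norm_num) (by norm_num)).mul_left _
  have htail_sum : Summable (fun k : ℕ => (-1 : ℝ) ^ (k + 8) * t ^ (k + 8) /
      ((Nat.factorial (k + 8) : ℝ) ^ 2)) := (summable_nat_add_iff 8).mpr hsum
  have habs : Summable (fun k : ℕ => ‖(-1 : ℝ) ^ (k + 8) * t ^ (k + 8) /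
      ((Nat.factorial (k + 8) : ℝ) ^ 2)‖) := htail_sum.abs
  rw [hfm]
  have h1' : |∑' k : ℕ, (-1 : ℝ) ^ (k + 8) * t ^ (k + 8) / ((Nat.factorial (k + 8) : ℝ) ^ 2)| ≤
      ∑' k : ℕ, |(-1 : ℝ) ^ (k + 8) * t ^ (k + 8) / ((Nat.factorial (k + 8) : ℝ) ^ 2)| :=
    norm_tsum_le_tsum_norm habs
  have h2' : (∑' k : ℕ, |(-1 : ℝ) ^ (k + 8) * t ^ (k + 8) / ((Nat.factorial (k + 8) : ℝ) ^ 2)|) ≤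
      ∑' k : ℕ, t ^ 8 / 1625702400 * (1 / 54) ^ k := Summable.tsum_le_tsum hterm habs hgeo
  have h3' : (∑' k : ℕ, t ^ 8 / 1625702400 * (1 / 54) ^ k) = t ^ 8 * (54 / 53 / 1625702400) := by
    rw [tsum_mul_left, tsum_geometric_of_lt_one (by norm_num) (by norm_num)]
    norm_num
    ring
  linarith

set_option maxHeartbeats 2000000 in
lemma P_anti {a b : ℝ} (ha : 0 ≤ a) (hab : a ≤ b) (hb : b ≤ 3 / 2) : P b ≤ P a := by
  have hb0 : 0 ≤ b := le_trans ha hab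
  have ha' : a ≤ 3 / 2 := le_trans hab hb
  have key : P a - P b = (b - a) *
      (1 - (a + b) / 4 + (a^2 + a*b + b^2) / 36 - (a^3 + a^2*b + a*b^2 + b^3) / 576
        + (a^4 + a^3*b + a^2*b^2 + a*b^3 + b^4) / 14400
        - (a^5 + a^4*b + a^3*b^2 + a^2*b^3 + a*b^4 + b^5) / 518400
        + (a^6 + a^5*b + a^4*b^2 + a^3*b^3 + a^2*b^4 + a*b^5 + b^6) / 25401600) := by
    unfold P; ring
  have A2 : a^2 ≤ 9/4 := by nlinarith
  have B2 : b^2 ≤ 9/4 := by nlinarith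
  have A3 : a^3 ≤ 27/8 := by nlinarith
  have B3 : b^3 ≤ 27/8 := by nlinarith
  have A4 : a^4 ≤ 81/16 := by nlinarith
  have B4 : b^4 ≤ 81/16 := by nlinarith
  have A5 : a^5 ≤ 243/32 := by nlinarith
  have B5 : b^5 ≤ 243/32 := by nlinarith
  have M21 : a^2*b ≤ 27/8 := by nlinarith
  have M12 : a*b^2 ≤ 27/8 := by nlinarith
  have M41 : a^4*b ≤ 243/32 := by nlinarith
  have M32 : a^3*b^2 ≤ 243/32 := by nlinarith
  have M23 : a^2*b^3 ≤ 243/32 := by nlinarith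
  have M14 : a*b^4 ≤ 243/32 := by nlinarith
  have N2 : 0 ≤ a^2 + a*b + b^2 := by nlinarith
  have N4 : 0 ≤ a^4 + a^3*b + a^2*b^2 + a*b^3 + b^4 := by positivity
  have N6 : 0 ≤ a^6 + a^5*b + a^4*b^2 + a^3*b^3 + a^2*b^4 + a*b^5 + b^6 := by positivity
  have hQ : 0 ≤ 1 - (a + b) / 4 + (a^2 + a*b + b^2) / 36 - (a^3 + a^2*b + a*b^2 + b^3) / 576
        + (a^4 + a^3*b + a^2*b^2 + a*b^3 + b^4) / 14400
        - (a^5 + a^4*b + a^3*b^2 + a^2*b^3 + a*b^4 + b^5) / 518400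
        + (a^6 + a^5*b + a^4*b^2 + a^3*b^3 + a^2*b^4 + a*b^5 + b^6) / 25401600 := by
    linarith
  nlinarith [mul_nonneg (sub_nonneg.mpr hab) hQ]

set_option maxHeartbeats 2000000 in
lemma f_pos {t : ℝ} (h0 : 0 ≤ t) (h1 : t ≤ 1.2024 ^ 2) : 0 < f t := by
  have ht32 : t ≤ 3 / 2 := by nlinarith
  have hb := abs_le.mp (tail_bound h0 ht32)
  have hPanti : P (1.2024 ^ 2) ≤ P t := P_anti h0 h1 (by norm_num)
  have ht8 : t ^ 8 ≤ ((1.2024:ℝ) ^ 2) ^ 8 := pow_le_pow_left₀ h0 h1 8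
  have hnum : 0 < P ((1.2024:ℝ) ^ 2) - ((1.2024:ℝ) ^ 2) ^ 8 * (54 / 53 / 1625702400) := by
    unfold P; norm_num
  linarith [hb.1, hb.2]

set_option maxHeartbeats 2000000 in
lemma f_neg : f ((1.20245:ℝ) ^ 2) < 0 := by
  have hb := abs_le.mp (tail_bound (t := (1.20245:ℝ) ^ 2) (by norm_num) (by norm_num))
  have hnum : P ((1.20245:ℝ) ^ 2) + ((1.20245:ℝ) ^ 2) ^ 8 * (54 / 53 / 1625702400) < 0 := by
    unfold P; norm_num
  linarith [hb.1, hb.2]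

lemma besselJ₀_pos {x : ℝ} (h0 : 0 ≤ x) (h1 : x ≤ 2.4048) : 0 < besselJ₀ x := by
  rw [besselJ₀_eq]
  refine f_pos (by positivity) ?_
  have hx : x / 2 ≤ 1.2024 := by linarith
  exact pow_le_pow_left₀ (by positivity) hx 2

lemma besselJ₀_neg : besselJ₀ 2.4049 < 0 := by
  rw [besselJ₀_eq, (by norm_num : (2.4049 : ℝ) / 2 = 1.20245)]
  exact f_neg

lemma besselJ₀_contOn : ContinuousOn besselJ₀ (Set.Icc (-3 : ℝ) 3) := by
  unfold besselJ₀
  refine continuousOn_tsum (fun k => ?_)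
    (Real.summable_pow_div_factorial (9 / 4)) (fun k x hx => ?_)
  · fun_prop
  · have hx1 : (-3:ℝ) ≤ x := hx.1
    have hx2 : x ≤ 3 := hx.2
    have hsq : (x / 2) ^ 2 ≤ 9 / 4 := by nlinarith
    have habs : ‖(-1:ℝ) ^ k * (x / 2) ^ (2 * k) / ((Nat.factorial k : ℝ) ^ 2)‖ =
        ((x / 2) ^ 2) ^ k / ((Nat.factorial k : ℝ) ^ 2) := by
      rw [Real.norm_eq_abs, abs_div, abs_mul, abs_pow, abs_neg, abs_one, one_pow, one_mul,
        abs_pow, pow_mul, sq_abs,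
        abs_of_nonneg (by positivity : (0:ℝ) ≤ (Nat.factorial k : ℝ) ^ 2)]
    rw [habs]
    exact div_le_div₀ (by positivity) (pow_le_pow_left₀ (sq_nonneg _) hsq k)
      (by positivity) (fact_le_sq k)

end BesselAux

/-- `J₀ > 0` on `[0, 2.4048]`, `J₀(2.4049) < 0`; hence `J₀` has a zero in `(2.4048, 2.4049)`
and its smallest positive zero `j₀,₁` lies in that interval. -/
theorem besselJ₀_first_zero_location :
    (∀ x ∈ Set.Icc (0 : ℝ) 2.4048, 0 < besselJ₀ x) ∧
    besselJ₀ 2.4049 < 0 ∧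
    (∃ x ∈ Set.Ioo (2.4048 : ℝ) 2.4049, besselJ₀ x = 0) ∧
    sInf {x : ℝ | 0 < x ∧ besselJ₀ x = 0} ∈ Set.Ioo (2.4048 : ℝ) 2.4049 := by
  have hpos : ∀ x ∈ Set.Icc (0 : ℝ) 2.4048, 0 < besselJ₀ x := fun x hx =>
    BesselAux.besselJ₀_pos hx.1 hx.2
  have hneg : besselJ₀ 2.4049 < 0 := BesselAux.besselJ₀_neg
  have hcont : ContinuousOn besselJ₀ (Set.Icc (2.4048 : ℝ) 2.4049) :=
    BesselAux.besselJ₀_contOn.mono (by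
      intro y hy
      exact ⟨by linarith [hy.1], by linarith [hy.2]⟩)
  have hivt := intermediate_value_Ioo' (by norm_num : (2.4048 : ℝ) ≤ 2.4049) hcont
  have h0mem : (0 : ℝ) ∈ Set.Ioo (besselJ₀ 2.4049) (besselJ₀ 2.4048) :=
    ⟨hneg, hpos 2.4048 ⟨by norm_num, le_refl _⟩⟩
  obtain ⟨x₀, hx₀mem, hx₀⟩ := hivt h0mem
  have hzero : ∃ x ∈ Set.Ioo (2.4048 : ℝ) 2.4049, besselJ₀ x = 0 := ⟨x₀, hx₀mem, hx₀⟩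
  refine ⟨hpos, hneg, hzero, ?_⟩
  set S : Set ℝ := {x : ℝ | 0 < x ∧ besselJ₀ x = 0} with hS
  have hx₀S : x₀ ∈ S := ⟨by have := hx₀mem.1; linarith, hx₀⟩
  have hSne : S.Nonempty := ⟨x₀, hx₀S⟩
  have hSlb : ∀ y ∈ S, (2.4048 : ℝ) ≤ y := by
    intro y hy
    by_contra hlt
    push_neg at hlt
    have := hpos y ⟨le_of_lt hy.1, le_of_lt hlt⟩
    rw [hy.2] at this
    exact lt_irrefl 0 this
  have hbdd : BddBelow S := ⟨2.4048, hSlb⟩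
  have hinf_le : sInf S ≤ x₀ := csInf_le hbdd hx₀S
  have hinf_ge : (2.4048 : ℝ) ≤ sInf S := le_csInf hSne hSlb
  have hinf_lt : sInf S < 2.4049 := lt_of_le_of_lt hinf_le hx₀mem.2
  have hm_closure : sInf S ∈ closure S := csInf_mem_closure hSne hbdd
  have hm_cont : ContinuousAt besselJ₀ (sInf S) := by
    have hmem : Set.Icc (-3 : ℝ) 3 ∈ nhds (sInf S) := by
      apply Icc_mem_nhds <;> linarith
    exact ContinuousOn.continuousAt BesselAux.besselJ₀_contOn hmem
  have hfm : besselJ₀ (sInf S) = 0 := by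
    have himg : besselJ₀ (sInf S) ∈ closure (besselJ₀ '' S) :=
      (hm_cont.continuousWithinAt).mem_closure_image hm_closure
    have hsub : besselJ₀ '' S ⊆ {0} := by
      rintro _ ⟨y, hy, rfl⟩
      exact hy.2
    have h0 : besselJ₀ (sInf S) ∈ closure ({0} : Set ℝ) := closure_mono hsub himg
    simpa using h0
  have hinf_ne : sInf S ≠ 2.4048 := by
    intro h
    have h2 := hpos 2.4048 ⟨by norm_num, le_refl _⟩
    rw [← h, hfm] at h2
    exact lt_irrefl 0 h2
  exact ⟨lt_of_le_of_ne hinf_ge (Ne.symm hinf_ne), hinf_lt⟩
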